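/- The incremental greedy scheduling algorithm for multiprocessor tasks is a 2-approximation: under the divisibility assumption q_0 | q_1 | ... | q_M | p, the makespan W produced by assigning tasks in order of decreasing processor requirement q (each task assigned to a group of q least-loaded processors) satisfies W < 2·W_opt. -/

import Mathlib

open Finset

/-- The `k`-th contiguous block of `q` processors among `Fin p`. -/
def block (p q k : ℕ) : Finset (Fin p) :=
  Finset.univ.filter (fun i => k * q ≤ (i : ℕ) ∧ (i : ℕ) < (k + 1) * q)

/-- The current completion time (maximal load) of the `k`-th block of `q`
processors; a task assigned to this block starts at this time. -/
noncomputable def blockMax {p : ℕ} (load : Fin p → ℝ) (q k : ℕ) : ℝ :=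
  if h : (block p q k).Nonempty then (block p q k).sup' h load else 0

/-- `GreedyRun p tasks load final starts`: starting from per-processor loads
`load`, the incremental greedy algorithm processes the list `tasks` (each task
is a pair `(q, w)` of processor requirement and execution time) in order,
assigning each task to a least-loaded group of `q` processors; `final` are the
resulting loads and `starts` records the start time of each task. -/
inductive GreedyRun (p : ℕ) :
    List (ℕ × ℝ) → (Fin p → ℝ) → (Fin p → ℝ) → List ℝ → Prop
  | nil (load : Fin p → ℝ) : GreedyRun p [] load load []
  | cons (q : ℕ) (w : ℝ) (k : ℕ) (rest : List (ℕ × ℝ))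
      (load final : Fin p → ℝ) (starts : List ℝ)
      (hk : k < p / q)
      (hmin : ∀ k' < p / q, blockMax load q k ≤ blockMax load q k')
      (hrun : GreedyRun p rest
        (fun i => if i ∈ block p q k then blockMax load q k + w else load i)
        final starts) :
      GreedyRun p ((q, w) :: rest) load final (blockMax load q k :: starts)

lemma mem_block_iff {p q : ℕ} (hq : 0 < q) (k : ℕ) (i : Fin p) :
    i ∈ block p q k ↔ (i : ℕ) / q = k := by
  simp only [block, Finset.mem_filter, Finset.mem_univ, true_and]
  constructor
  · rintro ⟨h1, h2⟩; exact Nat.div_eq_of_lt_le h1 h2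
  · rintro rfl
    refine ⟨Nat.div_mul_le_self _ _, ?_⟩
    have h1 : (i : ℕ) / q * q + (i : ℕ) % q = i := Nat.div_add_mod' _ _
    have h2 : (i : ℕ) % q < q := Nat.mod_lt _ hq
    calc (i : ℕ) = (i : ℕ) / q * q + (i : ℕ) % q := h1.symm
      _ < (i : ℕ) / q * q + q := Nat.add_lt_add_left h2 _
      _ = ((i : ℕ) / q + 1) * q := by ring

lemma block_card {p q k : ℕ} (hpk : (k + 1) * q ≤ p) : (block p q k).card = q := by
  have h : (block p q k).card = (Finset.Ico (k * q) ((k + 1) * q)).card := by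
    refine Finset.card_bij (fun i _ => (i : ℕ)) ?_ ?_ ?_
    · intro a ha
      simp only [block, Finset.mem_filter] at ha
      simp [Finset.mem_Ico, ha.2.1, ha.2.2]
    · intro a _ b _ hab; exact Fin.ext hab
    · intro b hb
      simp only [Finset.mem_Ico] at hb
      exact ⟨⟨b, lt_of_lt_of_le hb.2 hpk⟩, by simp [block, hb.1, hb.2], rfl⟩
  rw [h, Nat.card_Ico, Nat.succ_mul, Nat.add_sub_cancel_left]

lemma block_bound {p q k : ℕ} (hqp : q ∣ p) (hk : k < p / q) :
    (k + 1) * q ≤ p := by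
  calc (k + 1) * q ≤ p / q * q := Nat.mul_le_mul_right _ hk
    _ = p := Nat.div_mul_cancel hqp

lemma block_nonempty {p q k : ℕ} (hq : 0 < q) (hqp : q ∣ p) (hk : k < p / q) :
    (block p q k).Nonempty := by
  have hb := block_bound hqp hk
  have hs : (k + 1) * q = k * q + q := by ring
  refine ⟨⟨k * q, by omega⟩, ?_⟩
  simp only [block, Finset.mem_filter, Finset.mem_univ, true_and]
  exact ⟨le_refl _, by omega⟩

/-- Partition the sum over processors into blocks. -/
lemma sum_blocks {p q : ℕ} (hq : 0 < q) (hqp : q ∣ p) (f : Fin p → ℝ) :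
    ∑ k ∈ Finset.range (p / q), ∑ i ∈ block p q k, f i = ∑ i, f i := by
  have hmaps : ∀ i : Fin p, ∀ _ : i ∈ (Finset.univ : Finset (Fin p)),
      (i : ℕ) / q ∈ Finset.range (p / q) := by
    intro i _
    exact Finset.mem_range.2 (Nat.div_lt_div_of_lt_of_dvd hqp i.2)
  have h := Finset.sum_fiberwise_of_maps_to hmaps f
  rw [← h]
  refine Finset.sum_congr rfl fun k _ => Finset.sum_congr ?_ fun _ _ => rfl
  ext i
  simp [mem_block_iff hq, Finset.mem_filter]

/-- blockMax of a constant-on-block load equals the load of any member. -/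
lemma blockMax_eq {p q k : ℕ} (load : Fin p → ℝ) (hne : (block p q k).Nonempty)
    (i : Fin p) (hi : i ∈ block p q k)
    (hconst : ∀ j ∈ block p q k, load j = load i) :
    blockMax load q k = load i := by
  rw [blockMax, dif_pos hne]
  apply le_antisymm
  · exact Finset.sup'_le _ _ fun j hj => le_of_eq (hconst j hj)
  · exact Finset.le_sup' _ hi

/-- Sum of pairwise disjoint positive intervals inside `[0, B]` is at most `B`. -/
lemma sum_disjoint_intervals {ι : Type*} [DecidableEq ι] :
    ∀ (n : ℕ) (S : Finset ι), S.card = n → ∀ (a w : ι → ℝ) (B : ℝ), 0 ≤ B →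
    (∀ i ∈ S, 0 < w i) → (∀ i ∈ S, 0 ≤ a i) → (∀ i ∈ S, a i + w i ≤ B) →
    (∀ i ∈ S, ∀ j ∈ S, i ≠ j → a i + w i ≤ a j ∨ a j + w j ≤ a i) →
    ∑ i ∈ S, w i ≤ B := by
  intro n
  induction n with
  | zero =>
    intro S hS a w B hB _ _ _ _
    rw [Finset.card_eq_zero.1 hS]; simpa using hB
  | succ n ih =>
    intro S hS a w B hB hw ha hend hdisj
    have hne : S.Nonempty := Finset.card_pos.1 (hS ▸ Nat.succ_pos n)
    obtain ⟨i0, hi0, hmax⟩ := S.exists_max_image a hne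
    have key : ∀ j ∈ S.erase i0, a j + w j ≤ a i0 := by
      intro j hj
      have hjS := Finset.mem_of_mem_erase hj
      have hne' : j ≠ i0 := Finset.ne_of_mem_erase hj
      rcases hdisj i0 hi0 j hjS (Ne.symm hne') with h | h
      · exfalso; have h1 := hmax j hjS; have h2 := hw i0 hi0; linarith
      · exact h
    have hcard : (S.erase i0).card = n := by
      rw [Finset.card_erase_of_mem hi0, hS]; rfl
    have hrec := ih (S.erase i0) hcard a w (a i0) (ha i0 hi0)
      (fun i hi => hw i (Finset.mem_of_mem_erase hi))
      (fun i hi => ha i (Finset.mem_of_mem_erase hi)) key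
      (fun i hi j hj hij =>
        hdisj i (Finset.mem_of_mem_erase hi) j (Finset.mem_of_mem_erase hj) hij)
    have hsum : w i0 + ∑ i ∈ S.erase i0, w i = ∑ i ∈ S, w i :=
      Finset.add_sum_erase S w hi0
    have := hend i0 hi0
    linarith

lemma list_sum_get {α β : Type*} [AddCommMonoid β] (l : List α) (f : α → β) :
    (l.map f).sum = ∑ n : Fin l.length, f (l.get n) := by
  induction l with
  | nil => simp
  | cons a l ih =>
    rw [List.map_cons, List.sum_cons, ih]
    have h : ∑ n : Fin (a :: l).length, f ((a :: l).get n)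
        = ∑ n : Fin (l.length + 1), f ((a :: l).get n) := rfl
    rw [h, Fin.sum_univ_succ]
    rfl

/-- Main inductive bound for the greedy run. -/
lemma greedy_bound {p : ℕ} (hp : 0 < p) (Wopt : ℝ) (hW : 0 < Wopt) :
    ∀ (tasks : List (ℕ × ℝ)) (load final : Fin p → ℝ) (starts : List ℝ),
    GreedyRun p tasks load final starts →
    (∀ t ∈ tasks, 0 < t.1 ∧ t.1 ∣ p) →
    (∀ t ∈ tasks, ∀ t' ∈ tasks, t'.1 ≤ t.1 → t'.1 ∣ t.1) →
    (∀ t ∈ tasks, 0 < t.2 ∧ t.2 ≤ Wopt) →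
    tasks.Pairwise (fun a b => b.1 ≤ a.1) →
    (∀ t ∈ tasks, ∀ i j : Fin p, (i : ℕ) / t.1 = (j : ℕ) / t.1 → load i = load j) →
    (∀ i, load i < 2 * Wopt) →
    (∑ i, load i) + ((tasks.map (fun t => (t.1 : ℝ) * t.2)).sum) ≤ p * Wopt →
    ∀ i, final i < 2 * Wopt := by
  intro tasks
  induction tasks with
  | nil =>
    intro load final starts hrun _ _ _ _ _ hlt _ i
    cases hrun; exact hlt i
  | cons t rest ih =>
    intro load final starts hrun hdvdp hdvd hpos hsort hconst hlt hsum i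
    cases hrun with
    | cons q w k _ _ _ _ hk hmin hrun' =>
      have hqpos : 0 < q := (hdvdp (q, w) (List.mem_cons_self)).1
      have hqp : q ∣ p := (hdvdp (q, w) (List.mem_cons_self)).2
      have hwpos : 0 < w := (hpos (q, w) (List.mem_cons_self)).1
      have hwle : w ≤ Wopt := (hpos (q, w) (List.mem_cons_self)).2
      set c := blockMax load q k with hc
      have hconstq : ∀ i j : Fin p, (i : ℕ) / q = (j : ℕ) / q → load i = load j :=
        hconst (q, w) (List.mem_cons_self)
      have hbval : ∀ k' < p / q, ∀ i ∈ block p q k', blockMax load q k' = load i := by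
        intro k' hk' i hi
        exact blockMax_eq load (block_nonempty hqpos hqp hk') i hi
          (fun j hj => hconstq j i (by
            rw [mem_block_iff hqpos] at hi hj; rw [hi, hj]))
      have hbsum : ∀ k' < p / q, ∑ i ∈ block p q k', load i
          = (q : ℝ) * blockMax load q k' := by
        intro k' hk'
        obtain ⟨i0, hi0⟩ := block_nonempty hqpos hqp hk'
        rw [hbval k' hk' i0 hi0]
        rw [Finset.sum_congr rfl (fun j hj => hconstq j i0 (by
          rw [mem_block_iff hqpos] at hi0 hj; rw [hi0, hj]))]
        rw [Finset.sum_const, block_card (block_bound hqp hk'), nsmul_eq_mul]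
      have hq0 : (0 : ℝ) < q := by exact_mod_cast hqpos
      have hp0 : (0 : ℝ) < p := by exact_mod_cast hp
      have hpc : (p : ℝ) * c ≤ ∑ i, load i := by
        rw [← sum_blocks hqpos hqp load]
        have hb : ∀ k' ∈ Finset.range (p / q),
            (q : ℝ) * c ≤ ∑ i ∈ block p q k', load i := by
          intro k' hk'
          rw [hbsum k' (Finset.mem_range.1 hk')]
          have h1 : c ≤ blockMax load q k' := hmin k' (Finset.mem_range.1 hk')
          nlinarith
        calc (p : ℝ) * c = ∑ _k' ∈ Finset.range (p / q), (q : ℝ) * c := by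
              rw [Finset.sum_const, Finset.card_range, nsmul_eq_mul, ← mul_assoc,
                ← Nat.cast_mul, Nat.div_mul_cancel hqp]
          _ ≤ _ := Finset.sum_le_sum hb
      have hrestpos : 0 ≤ (rest.map (fun t => (t.1 : ℝ) * t.2)).sum := by
        apply List.sum_nonneg
        intro x hx
        obtain ⟨t', ht', rfl⟩ := List.mem_map.1 hx
        exact mul_nonneg (Nat.cast_nonneg _) (hpos t' (List.mem_cons_of_mem _ ht')).1.le
      have hsum' : (∑ i, load i) + (q : ℝ) * w ≤ p * Wopt := by
        simp only [List.map_cons, List.sum_cons] at hsum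
        linarith
      have hcW : c < Wopt := by nlinarith [mul_pos hq0 hwpos]
      have hc2 : c + w < 2 * Wopt := by linarith
      set newload := fun i => if i ∈ block p q k then c + w else load i with hnew
      have hnewlt : ∀ i, newload i < 2 * Wopt := by
        intro i; simp only [hnew]; split
        · exact hc2
        · exact hlt i
      have hnewsum : ∑ i, newload i = (∑ i, load i) + (q : ℝ) * w := by
        have h : ∑ i, newload i = ∑ i, (load i + if i ∈ block p q k then w else 0) := by
          apply Finset.sum_congr rfl
          intro j _
          simp only [hnew]; split
          · rename_i hj
            rw [hc, hbval k hk j hj]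
          · ring
        rw [h, Finset.sum_add_distrib, Finset.sum_ite_mem, Finset.univ_inter,
          Finset.sum_const, block_card (block_bound hqp hk), nsmul_eq_mul]
      have hsort' := List.pairwise_cons.1 hsort
      refine ih _ final _ hrun'
        (fun t' ht' => hdvdp t' (List.mem_cons_of_mem _ ht'))
        (fun t' ht' t'' ht'' => hdvd t' (List.mem_cons_of_mem _ ht') t''
          (List.mem_cons_of_mem _ ht''))
        (fun t' ht' => hpos t' (List.mem_cons_of_mem _ ht'))
        hsort'.2 ?_ hnewlt ?_ i
      · intro t' ht' i1 j1 hij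
        have hle : t'.1 ≤ q := hsort'.1 t' ht'
        have hdq : t'.1 ∣ q := hdvd (q, w) (List.mem_cons_self) t'
          (List.mem_cons_of_mem _ ht') hle
        have hq' : (i1 : ℕ) / q = (j1 : ℕ) / q := by
          obtain ⟨d, rfl⟩ := hdq
          rw [← Nat.div_div_eq_div_mul, ← Nat.div_div_eq_div_mul, hij]
        simp only [hnew, mem_block_iff hqpos, hq']
        split
        · rfl
        · exact hconst t' (List.mem_cons_of_mem _ ht') i1 j1 hij
      · rw [hnewsum]
        simp only [List.map_cons, List.sum_cons] at hsum
        linarith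

lemma chain_dvd {M : ℕ} (qs : ℕ → ℕ) (hchain : ∀ ℓ < M, qs ℓ ∣ qs (ℓ + 1)) :
    ∀ b, b ≤ M → ∀ a, a ≤ b → qs a ∣ qs b := by
  intro b
  induction b with
  | zero => intro _ a ha; have : a = 0 := Nat.le_zero.1 ha; rw [this]
  | succ n ihn =>
    intro hbM a ha
    rcases Nat.lt_or_ge a (n + 1) with h | h
    · exact dvd_trans (ihn (by omega) a (by omega)) (hchain n (by omega))
    · have : a = n + 1 := by omega
      rw [this]

/-- the incremental greedy scheduling algorithm for
multiprocessor tasks is a 2-approximation. Under the divisibility chain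
`q_0 ∣ q_1 ∣ … ∣ q_M ∣ p`, if the (positive-duration) tasks, each requiring
some `q_ℓ` processors, are processed in order of decreasing processor
requirement, each assigned to a least-loaded group, then the resulting
makespan is strictly less than twice the makespan of any valid schedule
(in particular, less than `2·W_opt`). A valid schedule assigns each task a
nonnegative start time and a set of processors of the required cardinality so
that tasks sharing a processor do not overlap in time; `Wopt` is any upper
bound for its completion times (e.g. its makespan). -/
theorem incremental_greedy_two_approximation {p M : ℕ} (hp : 0 < p)
    (qs : ℕ → ℕ) (hq : ∀ ℓ ≤ M, 0 < qs ℓ)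
    (hchain : ∀ ℓ < M, qs ℓ ∣ qs (ℓ + 1)) (hqp : qs M ∣ p)
    (tasks : List (ℕ × ℝ)) (htasks : tasks ≠ [])
    (hreq : ∀ t ∈ tasks, ∃ ℓ ≤ M, t.1 = qs ℓ)
    (hpos : ∀ t ∈ tasks, 0 < t.2)
    (hsorted : tasks.Pairwise (fun a b => b.1 ≤ a.1))
    (final : Fin p → ℝ) (starts : List ℝ)
    (hrun : GreedyRun p tasks (fun _ => 0) final starts) :
    ∀ (start : Fin tasks.length → ℝ) (procs : Fin tasks.length → Finset (Fin p))
      (Wopt : ℝ),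
      (∀ i, 0 ≤ start i) →
      (∀ i, (procs i).card = (tasks.get i).1) →
      (∀ i j, i ≠ j → (procs i ∩ procs j).Nonempty →
        start i + (tasks.get i).2 ≤ start j ∨ start j + (tasks.get j).2 ≤ start i) →
      (∀ i, start i + (tasks.get i).2 ≤ Wopt) →
      Finset.univ.sup' ⟨⟨0, hp⟩, Finset.mem_univ _⟩ final < 2 * Wopt := by
  intro start procs Wopt hstart hcard hov hend
  obtain ⟨t0, ht0⟩ := List.exists_mem_of_ne_nil tasks htasks
  obtain ⟨n0, hn0⟩ := List.mem_iff_get.1 ht0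
  have hW : 0 < Wopt := by
    have h1 := hstart n0
    have h2 := hend n0
    have h3 := hpos _ (List.get_mem tasks n0)
    linarith
  have hdur : ∀ t ∈ tasks, 0 < t.2 ∧ t.2 ≤ Wopt := by
    intro t ht
    obtain ⟨n, hn⟩ := List.mem_iff_get.1 ht
    refine ⟨hpos t ht, ?_⟩
    have h1 := hstart n
    have h2 := hend n
    rw [hn] at h2
    linarith
  -- area bound by double counting
  have key : ∀ x : Fin p,
      ∑ n ∈ Finset.univ.filter (fun n => x ∈ procs n), (tasks.get n).2 ≤ Wopt := by
    intro x
    refine sum_disjoint_intervals _ _ rfl start (fun n => (tasks.get n).2) Wopt hW.le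
      (fun n _ => hpos _ (List.get_mem tasks n)) (fun n _ => hstart n)
      (fun n _ => hend n) ?_
    intro n hn m hm hnm
    refine hov n m hnm ?_
    simp only [Finset.mem_filter] at hn hm
    exact ⟨x, Finset.mem_inter.2 ⟨hn.2, hm.2⟩⟩
  have harea : (tasks.map (fun t => (t.1 : ℝ) * t.2)).sum ≤ p * Wopt := by
    have hmap : (tasks.map (fun t => (t.1 : ℝ) * t.2)).sum
        = ∑ n : Fin tasks.length, ((tasks.get n).1 : ℝ) * (tasks.get n).2 := by
      exact list_sum_get tasks _
    rw [hmap]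
    calc ∑ n : Fin tasks.length, ((tasks.get n).1 : ℝ) * (tasks.get n).2
        = ∑ n : Fin tasks.length, ∑ _x ∈ procs n, (tasks.get n).2 := by
          refine Finset.sum_congr rfl fun n _ => ?_
          rw [Finset.sum_const, ← hcard n, nsmul_eq_mul]
      _ = ∑ n : Fin tasks.length, ∑ x : Fin p,
            (if x ∈ procs n then (tasks.get n).2 else 0) := by
          refine Finset.sum_congr rfl fun n _ => ?_
          rw [Finset.sum_ite_mem, Finset.univ_inter]
      _ = ∑ x : Fin p, ∑ n : Fin tasks.length,
            (if x ∈ procs n then (tasks.get n).2 else 0) := Finset.sum_comm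
      _ = ∑ x : Fin p, ∑ n ∈ Finset.univ.filter (fun n => x ∈ procs n),
            (tasks.get n).2 := by
          refine Finset.sum_congr rfl fun x _ => (Finset.sum_filter _ _).symm
      _ ≤ ∑ _x : Fin p, Wopt := Finset.sum_le_sum fun x _ => key x
      _ = p * Wopt := by rw [Finset.sum_const, Finset.card_univ, Fintype.card_fin,
            nsmul_eq_mul]
  have hdvdp : ∀ t ∈ tasks, 0 < t.1 ∧ t.1 ∣ p := by
    intro t ht
    obtain ⟨ℓ, hℓ, hte⟩ := hreq t ht
    refine ⟨hte ▸ hq ℓ hℓ, hte ▸ dvd_trans (chain_dvd qs hchain M le_rfl ℓ hℓ) hqp⟩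
  have hdvd : ∀ t ∈ tasks, ∀ t' ∈ tasks, t'.1 ≤ t.1 → t'.1 ∣ t.1 := by
    intro t ht t' ht' hle
    obtain ⟨ℓ, hℓ, hte⟩ := hreq t ht
    obtain ⟨ℓ', hℓ', hte'⟩ := hreq t' ht'
    rcases le_or_gt ℓ' ℓ with h | h
    · rw [hte, hte']
      exact chain_dvd qs hchain ℓ hℓ ℓ' h
    · have hd : qs ℓ ∣ qs ℓ' := chain_dvd qs hchain ℓ' hℓ' ℓ h.le
      have h1 : qs ℓ ≤ qs ℓ' := Nat.le_of_dvd (hq ℓ' hℓ') hd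
      have h2 : qs ℓ' ≤ qs ℓ := by rw [← hte, ← hte']; exact hle
      have : qs ℓ' = qs ℓ := le_antisymm h2 h1
      rw [hte, hte', this]
  have hfin : ∀ i, final i < 2 * Wopt := by
    refine greedy_bound hp Wopt hW tasks _ final starts hrun hdvdp hdvd hdur hsorted
      (fun t ht i j hij => rfl) (fun i => by linarith) ?_
    simpa using harea
  exact (Finset.sup'_lt_iff _).2 fun i _ => hfin i
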